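/- Let G be a finite simple graph and x a vertex with D_x ≥ 1. Let W and W' be symmetric weight functions on pairs of vertices, supported on the edges of G, with d_x(W) = ∑_u W_{xu} > 0 and d_x(W') = ∑_u W'_{xu} > 0, and suppose |W_{xu} − W'_{xu}| ≤ δ for every neighbor u of x. Then ∑_{u ∈ Γ(x)} | W_{xu}/d_x(W) − W'_{xu}/d_x(W') | ≤ 2·D_x·δ / d_x(W); equivalently, the total variation distance between the neighbor distributions p_{x,W} and p_{x,W'} is at most D_x·δ / d_x(W). -/

import Mathlib

open Finset

namespace WeightedCurv

variable {V : Type*} [Fintype V] [DecidableEq V]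

/-- Weighted degree. -/
noncomputable def dW (W : V → V → ℝ) (x : V) : ℝ := ∑ u, W x u

/-- Neighbour distribution at `x` induced by the weights `W`. -/
noncomputable def pW (W : V → V → ℝ) (x z : V) : ℝ := W x z / dW W x

/-- The `α`-lazy measure at `x` with weights `W`. -/
noncomputable def lazyW (W : V → V → ℝ) (α : ℝ) (x : V) : V → ℝ :=
  fun v => if v = x then α else (1 - α) * pW W x v

/-- The overlap functional of an edge `{x,y}`. -/
noncomputable def Ov (G : SimpleGraph V) [DecidableRel G.Adj] (W : V → V → ℝ) (x y : V) : ℝ :=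
  pW W x y + pW W y x +
    ∑ z ∈ G.neighborFinset x ∩ G.neighborFinset y, min (pW W x z) (pW W y z)

/-- `cpl` is a coupling of the measures `m1` and `m2` on `V`. -/
def IsCoupling (cpl : V × V → ℝ) (m1 m2 : V → ℝ) : Prop :=
  (∀ p, 0 ≤ cpl p) ∧ (∀ u, ∑ v, cpl (u, v) = m1 u) ∧ (∀ v, ∑ u, cpl (u, v) = m2 v)

/-- Transport cost of `cpl` with respect to the graph distance of `G`. -/
noncomputable def cost (G : SimpleGraph V) (cpl : V × V → ℝ) : ℝ :=
  ∑ p : V × V, cpl p * (G.dist p.1 p.2 : ℝ)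


/-- Stability of the neighbour distribution.
If two nonnegative symmetric edge-supported weights `W, W'` agree to within `δ` on the edges at
`x`, then `∑_{u∈Γ(x)} |p_{x,W}(u) − p_{x,W'}(u)| ≤ 2·D_x·δ/d_x(W)`; equivalently, the total
variation distance between the neighbour distributions is at most `D_x·δ/d_x(W)`. -/
theorem neighbour_distribution_stability
    (G : SimpleGraph V) [DecidableRel G.Adj] (W W' : V → V → ℝ)
    (hsymm : ∀ u v, W u v = W v u) (hnn : ∀ u v, 0 ≤ W u v)
    (hsupp : ∀ u v, W u v ≠ 0 → G.Adj u v)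
    (hsymm' : ∀ u v, W' u v = W' v u) (hnn' : ∀ u v, 0 ≤ W' u v)
    (hsupp' : ∀ u v, W' u v ≠ 0 → G.Adj u v)
    (x : V) (hDx : 1 ≤ G.degree x)
    (hdx : 0 < dW W x) (hdx' : 0 < dW W' x)
    (δ : ℝ)
    (hδ : ∀ u ∈ G.neighborFinset x, |W x u - W' x u| ≤ δ) :
    (∑ u ∈ G.neighborFinset x, |pW W x u - pW W' x u|
        ≤ 2 * (G.degree x : ℝ) * δ / dW W x)
    ∧ ((1 / 2) * ∑ u ∈ G.neighborFinset x, |pW W x u - pW W' x u|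
        ≤ (G.degree x : ℝ) * δ / dW W x) := by
  classical
  set Γ := G.neighborFinset x with hΓ
  have hd : dW W x = ∑ u ∈ Γ, W x u := by
    rw [dW]
    exact (Finset.sum_subset (Finset.subset_univ Γ) (fun u _ hu => by
      by_contra h
      exact hu (by simpa [hΓ, SimpleGraph.mem_neighborFinset] using hsupp x u h))).symm
  have hd' : dW W' x = ∑ u ∈ Γ, W' x u := by
    rw [dW]
    exact (Finset.sum_subset (Finset.subset_univ Γ) (fun u _ hu => by
      by_contra h
      exact hu (by simpa [hΓ, SimpleGraph.mem_neighborFinset] using hsupp' x u h))).symm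
  have hcardeq : Γ.card = G.degree x := rfl
  have hne : Γ.Nonempty := Finset.card_pos.mp (by omega)
  have hδ0 : 0 ≤ δ := by
    obtain ⟨u, hu⟩ := hne
    exact (abs_nonneg _).trans (hδ u hu)
  have hsumabs : ∑ u ∈ Γ, |W x u - W' x u| ≤ (G.degree x : ℝ) * δ := by
    calc ∑ u ∈ Γ, |W x u - W' x u| ≤ ∑ _u ∈ Γ, δ := Finset.sum_le_sum (fun u hu => hδ u hu)
      _ = (Γ.card : ℝ) * δ := by rw [Finset.sum_const, nsmul_eq_mul]
      _ = (G.degree x : ℝ) * δ := by rw [hcardeq]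
  have hdd : |dW W x - dW W' x| ≤ (G.degree x : ℝ) * δ := by
    rw [hd, hd', ← Finset.sum_sub_distrib]
    exact (Finset.abs_sum_le_sum_abs _ _).trans hsumabs
  have key : ∀ u ∈ Γ, |pW W x u - pW W' x u| ≤
      |W x u - W' x u| / dW W x
        + W' x u * (|dW W x - dW W' x| / (dW W x * dW W' x)) := by
    intro u _
    have h1 : pW W x u - pW W' x u =
        (W x u - W' x u) / dW W x
          + W' x u * ((dW W' x - dW W x) / (dW W x * dW W' x)) := by
      unfold pW
      field_simp
      ring
    rw [h1]
    calc |(W x u - W' x u) / dW W x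
          + W' x u * ((dW W' x - dW W x) / (dW W x * dW W' x))|
        ≤ |(W x u - W' x u) / dW W x|
          + |W' x u * ((dW W' x - dW W x) / (dW W x * dW W' x))| := abs_add_le _ _
      _ = |W x u - W' x u| / dW W x
          + W' x u * (|dW W x - dW W' x| / (dW W x * dW W' x)) := by
          rw [abs_div, abs_mul, abs_div, abs_of_pos hdx,
            abs_of_pos (mul_pos hdx hdx'), abs_of_nonneg (hnn' x u), abs_sub_comm (dW W' x) (dW W x)]
  have hsum1 : ∑ u ∈ Γ, |W x u - W' x u| / dW W x ≤ (G.degree x : ℝ) * δ / dW W x := by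
    rw [← Finset.sum_div]
    gcongr
  have hsum2 : ∑ u ∈ Γ, W' x u * (|dW W x - dW W' x| / (dW W x * dW W' x))
      ≤ (G.degree x : ℝ) * δ / dW W x := by
    rw [← Finset.sum_mul, ← hd']
    have heq : dW W' x * (|dW W x - dW W' x| / (dW W x * dW W' x))
        = |dW W x - dW W' x| / dW W x := by
      field_simp
    rw [heq]
    gcongr
  have hmain : ∑ u ∈ Γ, |pW W x u - pW W' x u|
      ≤ 2 * (G.degree x : ℝ) * δ / dW W x := by
    calc ∑ u ∈ Γ, |pW W x u - pW W' x u|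
        ≤ ∑ u ∈ Γ, (|W x u - W' x u| / dW W x
            + W' x u * (|dW W x - dW W' x| / (dW W x * dW W' x))) :=
          Finset.sum_le_sum key
      _ = (∑ u ∈ Γ, |W x u - W' x u| / dW W x)
            + ∑ u ∈ Γ, W' x u * (|dW W x - dW W' x| / (dW W x * dW W' x)) :=
          Finset.sum_add_distrib
      _ ≤ (G.degree x : ℝ) * δ / dW W x + (G.degree x : ℝ) * δ / dW W x :=
          add_le_add hsum1 hsum2
      _ = 2 * (G.degree x : ℝ) * δ / dW W x := by ring
  refine ⟨hmain, ?_⟩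
  have : (1 / 2 : ℝ) * (2 * (G.degree x : ℝ) * δ / dW W x)
      = (G.degree x : ℝ) * δ / dW W x := by ring
  nlinarith [hmain, Finset.sum_nonneg (fun u (_ : u ∈ Γ) => abs_nonneg (pW W x u - pW W' x u))]

end WeightedCurv
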